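/- Let B₁ be an r×(n−r) complex matrix. All minors of size r of the r×n matrix (B₁, I_r) are nonzero if and only if all minors of B₁ (of every size) are nonzero. -/

import Mathlib

open Matrix

private lemma det_sub_ne_zero_iff {α : Type*} [Fintype α] [DecidableEq α] {r : ℕ}
    (M : Matrix (Fin r) (Fin r) ℂ) (e₁ e₂ : α ≃ Fin r) :
    (M.submatrix e₁ e₂).det ≠ 0 ↔ M.det ≠ 0 := by
  have h1 : M.submatrix e₁ e₂
      = ((M.submatrix e₂ e₂).submatrix (e₁.trans e₂.symm : Equiv.Perm α) id) := by
    ext i j; simp [Matrix.submatrix_apply]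
  rw [h1, Matrix.det_permute, Matrix.det_submatrix_equiv_self, mul_ne_zero_iff]
  have : ((Equiv.Perm.sign (e₁.trans e₂.symm) : ℤ) : ℂ) ≠ 0 :=
    Int.cast_ne_zero.mpr (Units.ne_zero _)
  tauto

theorem stmt8 (n r : ℕ) (B₁ : Matrix (Fin r) (Fin (n - r)) ℂ) :
    (∀ f : Fin r → Fin (n - r) ⊕ Fin r, Function.Injective f →
      ((Matrix.fromCols B₁ 1).submatrix id f).det ≠ 0) ↔
    (∀ (k : ℕ) (f : Fin k → Fin r) (g : Fin k → Fin (n - r)),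
      Function.Injective f → Function.Injective g → (B₁.submatrix f g).det ≠ 0) := by
  constructor
  · -- LHS → RHS
    intro H k f g hf hg
    -- build h : Fin r → sum
    set h : Fin r → Fin (n - r) ⊕ Fin r := fun i =>
      if hp : ∃ s, f s = i then Sum.inl (g hp.choose) else Sum.inr i with hh
    have hval : ∀ (b : Fin k), h (f b) = Sum.inl (g b) := by
      intro b
      have hp : ∃ s, f s = f b := ⟨b, rfl⟩
      simp only [hh, dif_pos hp]
      congr 1
      exact congrArg g (hf hp.choose_spec)
    have hinj : Function.Injective h := by
      intro i j hij
      by_cases hi : ∃ s, f s = i <;> by_cases hj : ∃ s, f s = j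
      · simp only [hh, dif_pos hi, dif_pos hj] at hij
        have := hg (Sum.inl.inj hij)
        rw [← hi.choose_spec, ← hj.choose_spec, this]
      · simp only [hh, dif_pos hi, dif_neg hj] at hij; exact absurd hij (by simp)
      · simp only [hh, dif_neg hi, dif_pos hj] at hij; exact absurd hij (by simp)
      · simp only [hh, dif_neg hi, dif_neg hj] at hij; exact Sum.inr.inj hij
    have key := H h hinj
    -- the equivalence
    have ebij : Function.Bijective (Sum.elim f (Subtype.val : {i : Fin r // ¬ ∃ s, f s = i} → Fin r)) := by
      constructor
      · intro x y hxy
        cases x with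
        | inl a => cases y with
          | inl b => exact congrArg Sum.inl (hf hxy)
          | inr b => exact absurd hxy (by simpa using fun hc => b.2 ⟨a, hc⟩)
        | inr a => cases y with
          | inl b => exact absurd hxy.symm (by simpa using fun hc => a.2 ⟨b, hc⟩)
          | inr b => exact congrArg Sum.inr (Subtype.ext hxy)
      · intro i
        by_cases hi : ∃ s, f s = i
        · exact ⟨Sum.inl hi.choose, hi.choose_spec⟩
        · exact ⟨Sum.inr ⟨i, hi⟩, rfl⟩
    set e := Equiv.ofBijective _ ebij with he
    have heval : ∀ x, e x = Sum.elim f Subtype.val x := fun x => rfl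
    set M := (Matrix.fromCols B₁ 1).submatrix id h with hM
    have hblock : M.submatrix e e = Matrix.fromBlocks (B₁.submatrix f g) 0
        (Matrix.of fun (a : {i : Fin r // ¬ ∃ s, f s = i}) b => B₁ a.val (g b)) 1 := by
      ext x y
      cases x with
      | inl a =>
        cases y with
        | inl b =>
          simp [hM, heval, hval b, Matrix.fromCols_apply_inl]
        | inr b =>
          have hb : h b.val = Sum.inr b.val := by simp only [hh, dif_neg b.2]
          simp only [Matrix.submatrix_apply, heval, Sum.elim_inl, Sum.elim_inr, hM, hb,
            Matrix.fromCols_apply_inr, Matrix.fromBlocks_apply₁₂, id_eq]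
          have : f a ≠ b.val := fun hc => b.2 ⟨a, hc⟩
          simp [Matrix.one_apply, this]
      | inr a =>
        cases y with
        | inl b =>
          simp [hM, heval, hval b, Matrix.fromCols_apply_inl]
        | inr b =>
          have hb : h b.val = Sum.inr b.val := by simp only [hh, dif_neg b.2]
          simp only [Matrix.submatrix_apply, heval, Sum.elim_inr, hM, hb,
            Matrix.fromCols_apply_inr, Matrix.fromBlocks_apply₂₂, id_eq]
          simp [Matrix.one_apply, Subtype.ext_iff]
    have : M.det = (B₁.submatrix f g).det := by
      rw [← Matrix.det_submatrix_equiv_self e M, hblock,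
        Matrix.det_fromBlocks_zero₁₂, Matrix.det_one, mul_one]
    rwa [this] at key
  · -- RHS → LHS
    intro H h hinj
    classical
    set L := {i : Fin r // (h i).isLeft} with hL
    set R := {i : Fin r // ¬ (h i).isLeft} with hR
    set g₀ : L → Fin (n - r) := fun i => (h i.val).getLeft i.2 with hg₀
    set v : R → Fin r := fun i => (h i.val).getRight (Sum.not_isLeft.mp i.2) with hv
    have hLval : ∀ i : L, h i.val = Sum.inl (g₀ i) := fun i => (Sum.inl_getLeft _ i.2).symm
    have hRval : ∀ i : R, h i.val = Sum.inr (v i) := fun i =>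
      (Sum.inr_getRight _ (Sum.not_isLeft.mp i.2)).symm
    have hg₀inj : Function.Injective g₀ := by
      intro a b hab
      have : h a.val = h b.val := by rw [hLval a, hLval b, hab]
      exact Subtype.ext (hinj this)
    have hvinj : Function.Injective v := by
      intro a b hab
      have : h a.val = h b.val := by rw [hRval a, hRval b, hab]
      exact Subtype.ext (hinj this)
    set k := Fintype.card L with hk
    have hcardR : Fintype.card R = r - k := by
      show Fintype.card {i : Fin r // ¬(h i).isLeft = true}
        = r - Fintype.card {i : Fin r // (h i).isLeft = true}
      rw [Fintype.card_subtype_compl, Fintype.card_fin]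
    have hcard : Fintype.card {i : Fin r // i ∉ Set.range v} = k := by
      have h1 : Fintype.card {i : Fin r // i ∉ Set.range v}
          = Fintype.card ((Set.range v)ᶜ : Set (Fin r)) := by
        apply Fintype.card_congr
        exact Equiv.subtypeEquivRight (fun x => by simp)
      rw [h1, Fintype.card_compl_set, Set.card_range_of_injective hvinj, hcardR,
        Fintype.card_fin]
      have hkle : k ≤ r := by
        rw [hk]
        simpa using Fintype.card_subtype_le (fun i : Fin r => (h i).isLeft)
      omega
    obtain ⟨eqW⟩ : Nonempty (Fin k ≃ {i : Fin r // i ∉ Set.range v}) :=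
      ⟨Fintype.equivOfCardEq (by rw [Fintype.card_fin, hcard])⟩
    set eqL : Fin k ≃ L := (Fintype.equivFinOfCardEq rfl).symm with heqL
    set f : Fin k → Fin r := fun s => (eqW s).val with hf
    set g : Fin k → Fin (n - r) := fun s => g₀ (eqL s) with hg
    have hfinj : Function.Injective f := fun a b hab =>
      eqW.injective (Subtype.ext hab)
    have hginj : Function.Injective g := fun a b hab =>
      eqL.injective (hg₀inj hab)
    -- row equivalence
    have e1bij : Function.Bijective (Sum.elim f v : Fin k ⊕ R → Fin r) := by
      rw [Fintype.bijective_iff_injective_and_card]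
      constructor
      · intro x y hxy
        cases x with
        | inl a => cases y with
          | inl b => exact congrArg Sum.inl (hfinj hxy)
          | inr b => exact absurd hxy (fun hc => (eqW a).2 ⟨b, hc.symm⟩)
        | inr a => cases y with
          | inl b => exact absurd hxy (fun hc => (eqW b).2 ⟨a, hc⟩)
          | inr b => exact congrArg Sum.inr (hvinj hxy)
      · simp only [Fintype.card_sum, Fintype.card_fin, hcardR]
        have hkle : k ≤ r := by
          rw [hk]
          simpa using Fintype.card_subtype_le (fun i : Fin r => (h i).isLeft)
        omega
    set e₁ : (Fin k ⊕ R) ≃ Fin r := Equiv.ofBijective _ e1bij with he₁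
    have he₁val : ∀ x, e₁ x = Sum.elim f v x := fun x => rfl
    set e₂ : (Fin k ⊕ R) ≃ Fin r :=
      (Equiv.sumCongr eqL (Equiv.refl R)).trans
        (Equiv.sumCompl (fun i : Fin r => (h i).isLeft = true)) with he₂
    have he₂l : ∀ a : Fin k, e₂ (Sum.inl a) = (eqL a).val := fun a => rfl
    have he₂r : ∀ a : R, e₂ (Sum.inr a) = a.val := fun a => rfl
    set M := (Matrix.fromCols B₁ 1).submatrix id h with hM
    have hblock : M.submatrix e₁ e₂ = Matrix.fromBlocks (B₁.submatrix f g) 0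
        (Matrix.of fun (a : R) b => B₁ (v a) (g b)) 1 := by
      ext x y
      cases x with
      | inl a =>
        cases y with
        | inl b =>
          simp [hM, he₁val, he₂l, hLval (eqL b), Matrix.fromCols_apply_inl, hg]
        | inr b =>
          simp only [Matrix.submatrix_apply, he₁val, he₂r, Sum.elim_inl, hM, hRval b,
            Matrix.fromCols_apply_inr, Matrix.fromBlocks_apply₁₂, id_eq]
          have : f a ≠ v b := fun hc => (eqW a).2 ⟨b, hc.symm⟩
          simp [Matrix.one_apply, this]
      | inr a =>
        cases y with
        | inl b =>
          simp [hM, he₁val, he₂l, hLval (eqL b), Matrix.fromCols_apply_inl, hg]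
        | inr b =>
          simp only [Matrix.submatrix_apply, he₁val, he₂r, Sum.elim_inr, hM, hRval b,
            Matrix.fromCols_apply_inr, Matrix.fromBlocks_apply₂₂, id_eq]
          have : v a = v b ↔ a = b := ⟨fun hc => hvinj hc, fun hc => by rw [hc]⟩
          simp [Matrix.one_apply, this]
    have hdet : (M.submatrix e₁ e₂).det = (B₁.submatrix f g).det := by
      rw [hblock, Matrix.det_fromBlocks_zero₁₂, Matrix.det_one, mul_one]
    have := H k f g hfinj hginj
    rw [← hdet] at this
    exact (det_sub_ne_zero_iff M e₁ e₂).mp this
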